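/- If a graph G contains two disjoint anti-complete cliques A and B of sizes 4 and 3 respectively, and a vertex v with at least one neighbor in each of A and B, then G contains an induced bowtie or G has an edge not contained in any triangle. -/
import Mathlib
open Finset

/-- The bowtie: two triangles sharing one vertex. -/
def bowtie : SimpleGraph (Fin 5) :=
  SimpleGraph.fromRel (fun a b => a = 0 ∨ (a = 1 ∧ b = 2) ∨ (a = 3 ∧ b = 4))

lemma bowtie_emb {V : Type*} {G : SimpleGraph V} {c p q r s : V}
    (hcp : G.Adj c p) (hcq : G.Adj c q) (hcr : G.Adj c r) (hcs : G.Adj c s)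
    (hpq : G.Adj p q) (hrs : G.Adj r s)
    (hpr : ¬ G.Adj p r) (hps : ¬ G.Adj p s) (hqr : ¬ G.Adj q r) (hqs : ¬ G.Adj q s)
    (hpr' : p ≠ r) (hps' : p ≠ s) (hqr' : q ≠ r) (hqs' : q ≠ s) :
    Nonempty (bowtie ↪g G) := by
  have hcp' := hcp.ne; have hcq' := hcq.ne; have hcr' := hcr.ne; have hcs' := hcs.ne
  have hpq' := hpq.ne; have hrs' := hrs.ne
  refine ⟨⟨⟨![c,p,q,r,s], ?_⟩, ?_⟩⟩
  · intro i j h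
    fin_cases i <;> fin_cases j <;> simp_all
  · intro i j
    fin_cases i <;> fin_cases j <;>
      simp [bowtie, SimpleGraph.fromRel, G.adj_comm] <;> tauto

lemma pick2 {V : Type*} {s : Finset V} {P : V → Prop} [DecidablePred P]
    (h : 2 ≤ (s.filter P).card) :
    ∃ a b, a ∈ s ∧ b ∈ s ∧ a ≠ b ∧ P a ∧ P b := by
  obtain ⟨a, ha, b, hb, hab⟩ := Finset.one_lt_card.mp h
  simp only [Finset.mem_filter] at ha hb
  exact ⟨a, b, ha.1, hb.1, hab, ha.2, hb.2⟩

lemma pick1 {V : Type*} {s : Finset V} {P : V → Prop} [DecidablePred P]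
    (h : 1 ≤ (s.filter P).card) : ∃ a, a ∈ s ∧ P a := by
  obtain ⟨a, ha⟩ := Finset.card_pos.mp h
  simp only [Finset.mem_filter] at ha
  exact ⟨a, ha.1, ha.2⟩

lemma splitc {V : Type*} (s : Finset V) (P Q : V → Prop) [DecidablePred P] [DecidablePred Q] :
    (s.filter fun u => P u ∧ Q u).card + (s.filter fun u => P u ∧ ¬ Q u).card
      = (s.filter P).card := by
  rw [← Finset.filter_filter, ← Finset.filter_filter]
  exact Finset.card_filter_add_card_filter_not _

/-- Bowtie centered at `a0 ∈ A`, with triangles `a0 v x` and two vertices of `A`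
missed by `x`. -/
lemma centerA {V : Type*} {G : SimpleGraph V} {A : Finset V} {a0 v x : V}
    [DecidablePred (fun u => G.Adj v u)] [DecidablePred (fun u => G.Adj x u)]
    (hA4 : A.card = 4)
    (hAadj : ∀ ⦃a b : V⦄, a ∈ A → b ∈ A → a ≠ b → G.Adj a b)
    (ha0 : a0 ∈ A) (hvnA : v ∉ A) (hxnA : x ∉ A)
    (hva0 : G.Adj v a0) (hvx : G.Adj v x) (hax : G.Adj a0 x)
    (hua : ∀ a' ∈ A, G.Adj v a' → a' = a0)
    (hSxA : (A.filter (fun u => G.Adj x u)).card ≤ 2) :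
    Nonempty (bowtie ↪g G) := by
  classical
  have hsum := Finset.card_filter_add_card_filter_not (s := A) (fun u => G.Adj x u)
  have h2 : 2 ≤ (A.filter fun u => ¬ G.Adj x u).card := by omega
  obtain ⟨a1, a2, ha1, ha2, h12, hna1, hna2⟩ := pick2 h2
  have h01 : a0 ≠ a1 := by rintro rfl; exact hna1 hax.symm
  have h02 : a0 ≠ a2 := by rintro rfl; exact hna2 hax.symm
  exact bowtie_emb hva0.symm hax (hAadj ha0 ha1 h01) (hAadj ha0 ha2 h02) hvx
    (hAadj ha1 ha2 h12)
    (fun h => h01 (hua a1 ha1 h).symm) (fun h => h02 (hua a2 ha2 h).symm)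
    (fun h => hna1 h) (fun h => hna2 h)
    (by rintro rfl; exact hvnA ha1) (by rintro rfl; exact hvnA ha2)
    (by rintro rfl; exact hxnA ha1) (by rintro rfl; exact hxnA ha2)

/-- If `G` has disjoint anti-complete cliques `A`, `B` of sizes 4 and 3, and a vertex
`v` with a neighbor in each, then `G` has an induced bowtie or an edge in no triangle. -/
theorem bowtie_or_triangle_free_edge_of_anticomplete_cliques {V : Type*}
    (G : SimpleGraph V) (A B : Finset V) (hdisj : Disjoint A B)
    (hA : G.IsNClique 4 A) (hB : G.IsNClique 3 B)
    (hanti : ∀ a ∈ A, ∀ b ∈ B, ¬ G.Adj a b)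
    (v : V) (hvA : ∃ a ∈ A, G.Adj v a) (hvB : ∃ b ∈ B, G.Adj v b) :
    Nonempty (bowtie ↪g G) ∨
      ∃ u w, G.Adj u w ∧ ∀ x, ¬ (G.Adj u x ∧ G.Adj w x) := by
  classical
  by_cases htri : ∀ u w, G.Adj u w → ∃ z, G.Adj u z ∧ G.Adj w z
  swap
  · right
    push_neg at htri
    obtain ⟨u, w, huw, hz⟩ := htri
    exact ⟨u, w, huw, fun z h => hz z h.1 h.2⟩
  left
  have hA4 : A.card = 4 := hA.2
  have hB3 : B.card = 3 := hB.2
  have hAadj : ∀ ⦃a b : V⦄, a ∈ A → b ∈ A → a ≠ b → G.Adj a b := by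
    intro a b ha hb hne
    exact hA.1 (by exact_mod_cast ha) (by exact_mod_cast hb) hne
  have hBadj : ∀ ⦃a b : V⦄, a ∈ B → b ∈ B → a ≠ b → G.Adj a b := by
    intro a b ha hb hne
    exact hB.1 (by exact_mod_cast ha) (by exact_mod_cast hb) hne
  have hnAB : ∀ ⦃a : V⦄, a ∈ A → a ∉ B := fun a ha hb =>
    (Finset.disjoint_left.mp hdisj) ha hb
  obtain ⟨a0, ha0, hva0⟩ := hvA
  obtain ⟨b0, hb0, hvb0⟩ := hvB
  have hvnA : v ∉ A := fun h => hanti v h b0 hb0 hvb0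
  have hvnB : v ∉ B := fun h => hanti a0 ha0 v h hva0.symm
  by_cases hw : ∃ w, 2 ≤ (A.filter (fun u => G.Adj w u)).card ∧ 2 ≤ (B.filter (fun u => G.Adj w u)).card
  · obtain ⟨w, hwa, hwb⟩ := hw
    obtain ⟨a1, a2, ha1, ha2, ha12, hwa1, hwa2⟩ := pick2 hwa
    obtain ⟨b1, b2, hb1, hb2, hb12, hwb1, hwb2⟩ := pick2 hwb
    exact bowtie_emb hwa1 hwa2 hwb1 hwb2 (hAadj ha1 ha2 ha12) (hBadj hb1 hb2 hb12)
      (hanti _ ha1 _ hb1) (hanti _ ha1 _ hb2) (hanti _ ha2 _ hb1) (hanti _ ha2 _ hb2)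
      (by rintro rfl; exact hnAB ha1 hb1) (by rintro rfl; exact hnAB ha1 hb2)
      (by rintro rfl; exact hnAB ha2 hb1) (by rintro rfl; exact hnAB ha2 hb2)
  have h22 : ∀ w : V,
      ¬ (2 ≤ (A.filter (fun u => G.Adj w u)).card ∧ 2 ≤ (B.filter (fun u => G.Adj w u)).card) :=
    fun w hc => hw ⟨w, hc⟩
  by_cases hNvB : 2 ≤ (B.filter (fun u => G.Adj v u)).card
  · -- Case II : v has ≥ 2 neighbours in B, hence ≤ 1 in A
    replace hNvB : 2 ≤ (B.filter (fun u => G.Adj v u)).card := hNvB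
    have hNvA : (A.filter (fun u => G.Adj v u)).card ≤ 1 := by
      by_contra h; push_neg at h; exact h22 v ⟨by omega, hNvB⟩
    have hua : ∀ a' ∈ A, G.Adj v a' → a' = a0 := fun a' h' hadj =>
      Finset.card_le_one.mp hNvA _ (Finset.mem_filter.mpr ⟨h', hadj⟩) _
        (Finset.mem_filter.mpr ⟨ha0, hva0⟩)
    obtain ⟨x, hvx, hax⟩ := htri v a0 hva0
    have hxnA : x ∉ A := fun h => hax.ne (hua x h hvx).symm
    have hxnB : x ∉ B := fun h => hanti a0 ha0 x h hax
    by_cases hSxA : 3 ≤ (A.filter (fun u => G.Adj x u)).card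
    · -- II.2
      replace hSxA : 3 ≤ (A.filter (fun u => G.Adj x u)).card := hSxA
      have ha0f : a0 ∈ A.filter (fun u => G.Adj x u) := Finset.mem_filter.mpr ⟨ha0, hax.symm⟩
      by_cases hbb : 2 ≤ (B.filter fun u => G.Adj v u ∧ ¬ G.Adj x u).card
      · obtain ⟨b1, b2, hb1, hb2, hb12, ⟨hvb1, hnxb1⟩, ⟨hvb2, hnxb2⟩⟩ := pick2 hbb
        -- center v : triangles v-x-a0 and v-b1-b2
        exact bowtie_emb hvx hva0 hvb1 hvb2 hax.symm (hBadj hb1 hb2 hb12)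
          hnxb1 hnxb2 (hanti _ ha0 _ hb1) (hanti _ ha0 _ hb2)
          (by rintro rfl; exact hxnB hb1) (by rintro rfl; exact hxnB hb2)
          (by rintro rfl; exact hnAB ha0 hb1) (by rintro rfl; exact hnAB ha0 hb2)
      · push_neg at hbb
        replace hbb : (B.filter fun u => G.Adj v u ∧ ¬ G.Adj x u).card ≤ 1 :=
          Nat.lt_succ_iff.mp hbb
        have herase : 2 ≤ ((A.filter (fun u => G.Adj x u)).erase a0).card := by
          have := Finset.card_erase_of_mem ha0f; omega
        obtain ⟨a2, ha2e, a3, ha3e, h23⟩ := Finset.one_lt_card.mp herase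
        rw [Finset.mem_erase, Finset.mem_filter] at ha2e ha3e
        obtain ⟨h2ne, ha2A, hxa2⟩ := ha2e
        obtain ⟨h3ne, ha3A, hxa3⟩ := ha3e
        have hcov : B.filter (fun u => G.Adj v u) ⊆
            (B.filter fun u => G.Adj v u ∧ G.Adj x u) ∪
            (B.filter fun u => G.Adj v u ∧ ¬ G.Adj x u) := by
          intro u hu; simp only [Finset.mem_filter, Finset.mem_union] at hu ⊢; tauto
        have hcc := (Finset.card_le_card hcov).trans (Finset.card_union_le _ _)
        have h1 : 1 ≤ (B.filter fun u => G.Adj v u ∧ G.Adj x u).card := by omega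
        obtain ⟨b1, hb1, hvb1, hxb1⟩ := pick1 h1
        -- center x : triangles x-a2-a3 and x-v-b1
        exact bowtie_emb hxa2 hxa3 hvx.symm hxb1 (hAadj ha2A ha3A h23) hvb1
          (fun h => h2ne (hua a2 ha2A h.symm)) (hanti _ ha2A _ hb1)
          (fun h => h3ne (hua a3 ha3A h.symm)) (hanti _ ha3A _ hb1)
          (by rintro rfl; exact hvnA ha2A) (by rintro rfl; exact hnAB ha2A hb1)
          (by rintro rfl; exact hvnA ha3A) (by rintro rfl; exact hnAB ha3A hb1)
    · -- II.1
      push_neg at hSxA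
      replace hSxA : (A.filter (fun u => G.Adj x u)).card ≤ 2 := Nat.lt_succ_iff.mp hSxA
      exact centerA hA4 hAadj ha0 hvnA hxnA hva0 hvx hax hua (by omega)
  · -- Case I : v has exactly one neighbour b0 in B
    push_neg at hNvB
    replace hNvB : (B.filter (fun u => G.Adj v u)).card ≤ 1 := Nat.lt_succ_iff.mp hNvB
    have hubv : ∀ b' ∈ B, G.Adj v b' → b' = b0 := fun b' h' hadj =>
      Finset.card_le_one.mp hNvB _ (Finset.mem_filter.mpr ⟨h', hadj⟩) _
        (Finset.mem_filter.mpr ⟨hb0, hvb0⟩)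
    obtain ⟨y, hvy, hby⟩ := htri v b0 hvb0
    have hynB : y ∉ B := fun h => hby.ne (hubv y h hvy).symm
    have hynA : y ∉ A := fun h => hanti y h b0 hb0 hby.symm
    by_cases hSyB : 2 ≤ (B.filter (fun u => G.Adj y u)).card
    · -- I.2
      replace hSyB : 2 ≤ (B.filter (fun u => G.Adj y u)).card := hSyB
      have hyA1 : (A.filter (fun u => G.Adj y u)).card ≤ 1 := by
        by_contra h; push_neg at h; exact h22 y ⟨by omega, hSyB⟩
      by_cases hNvA2 : 2 ≤ (A.filter (fun u => G.Adj v u)).card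
      · -- I.2.a
        replace hNvA2 : 2 ≤ (A.filter (fun u => G.Adj v u)).card := hNvA2
        by_cases hc : 2 ≤ (A.filter fun u => G.Adj v u ∧ ¬ G.Adj y u).card
        · obtain ⟨a1, a2, ha1, ha2, h12, ⟨hva1, hnya1⟩, ⟨hva2, hnya2⟩⟩ := pick2 hc
          -- center v : triangles v-a1-a2 and v-y-b0
          exact bowtie_emb hva1 hva2 hvy hvb0 (hAadj ha1 ha2 h12) hby.symm
            (fun h => hnya1 h.symm) (hanti _ ha1 _ hb0)
            (fun h => hnya2 h.symm) (hanti _ ha2 _ hb0)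
            (by rintro rfl; exact hynA ha1) (by rintro rfl; exact hnAB ha1 hb0)
            (by rintro rfl; exact hynA ha2) (by rintro rfl; exact hnAB ha2 hb0)
        · push_neg at hc
          replace hc : (A.filter fun u => G.Adj v u ∧ ¬ G.Adj y u).card ≤ 1 :=
            Nat.lt_succ_iff.mp hc
          have hcov : A.filter (fun u => G.Adj v u) ⊆
              (A.filter fun u => G.Adj v u ∧ G.Adj y u) ∪
              (A.filter fun u => G.Adj v u ∧ ¬ G.Adj y u) := by
            intro u hu; simp only [Finset.mem_filter, Finset.mem_union] at hu ⊢; tauto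
          have hcc := (Finset.card_le_card hcov).trans (Finset.card_union_le _ _)
          have h1 : 1 ≤ (A.filter fun u => G.Adj v u ∧ G.Adj y u).card := by omega
          obtain ⟨a1, ha1, hva1, hya1⟩ := pick1 h1
          have huya : ∀ u ∈ A, G.Adj y u → u = a1 := fun u hu hadj =>
            Finset.card_le_one.mp hyA1 _ (Finset.mem_filter.mpr ⟨hu, hadj⟩) _
              (Finset.mem_filter.mpr ⟨ha1, hya1⟩)
          have hsub2 : (A.filter fun u => G.Adj v u ∧ G.Adj y u) ⊆
              A.filter (fun u => G.Adj y u) := by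
            intro u hu; simp only [Finset.mem_filter] at hu ⊢; tauto
          have h2' := Finset.card_le_card hsub2
          have hcov2 : A ⊆ A.filter (fun u => G.Adj v u) ∪
              A.filter (fun u => ¬ G.Adj v u ∧ ¬ G.Adj y u) := by
            intro u hu
            simp only [Finset.mem_filter, Finset.mem_union]
            by_cases h1 : G.Adj v u
            · tauto
            · exact Or.inr ⟨hu, h1, fun h2 => h1 (by rw [huya u hu h2]; exact hva1)⟩
          have hcc2 := (Finset.card_le_card hcov2).trans (Finset.card_union_le _ _)
          have hT2 : 2 ≤ (A.filter fun u => ¬ G.Adj v u ∧ ¬ G.Adj y u).card := by omega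
          obtain ⟨a3, a4, ha3, ha4, h34, ⟨hnva3, hnya3⟩, ⟨hnva4, hnya4⟩⟩ := pick2 hT2
          -- center a1 : triangles a1-v-y and a1-a3-a4
          exact bowtie_emb hva1.symm hya1.symm
            (hAadj ha1 ha3 (by rintro rfl; exact hnva3 hva1))
            (hAadj ha1 ha4 (by rintro rfl; exact hnva4 hva1))
            hvy (hAadj ha3 ha4 h34)
            hnva3 hnva4 hnya3 hnya4
            (by rintro rfl; exact hvnA ha3) (by rintro rfl; exact hvnA ha4)
            (by rintro rfl; exact hynA ha3) (by rintro rfl; exact hynA ha4)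
      · -- I.2.b
        push_neg at hNvA2
        replace hNvA2 : (A.filter (fun u => G.Adj v u)).card ≤ 1 :=
          Nat.lt_succ_iff.mp hNvA2
        have hua : ∀ a' ∈ A, G.Adj v a' → a' = a0 := fun a' h' hadj =>
          Finset.card_le_one.mp hNvA2 _ (Finset.mem_filter.mpr ⟨h', hadj⟩) _
            (Finset.mem_filter.mpr ⟨ha0, hva0⟩)
        obtain ⟨x, hvx, hax⟩ := htri v a0 hva0
        have hxnA : x ∉ A := fun h => hax.ne (hua x h hvx).symm
        have hxnB : x ∉ B := fun h => hanti a0 ha0 x h hax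
        by_cases hSxA : 3 ≤ (A.filter (fun u => G.Adj x u)).card
        · -- I.2.b.ii
          replace hSxA : 3 ≤ (A.filter (fun u => G.Adj x u)).card := hSxA
          have hxB1 : (B.filter (fun u => G.Adj x u)).card ≤ 1 := by
            by_contra h; push_neg at h; exact h22 x ⟨by omega, by omega⟩
          have hxyne : x ≠ y := by rintro rfl; omega
          by_cases hxy : G.Adj x y
          · by_cases hgood : 2 ≤ (A.filter fun u => G.Adj x u ∧ ¬ G.Adj y u ∧ u ≠ a0).card
            · obtain ⟨a1, a2, ha1, ha2, h12, ⟨hxa1, hnya1, hne1⟩, ⟨hxa2, hnya2, hne2⟩⟩ :=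
                pick2 hgood
              -- center x : triangles x-a1-a2 and x-v-y
              exact bowtie_emb hxa1 hxa2 hvx.symm hxy (hAadj ha1 ha2 h12) hvy
                (fun h => hne1 (hua a1 ha1 h.symm)) (fun h => hnya1 h.symm)
                (fun h => hne2 (hua a2 ha2 h.symm)) (fun h => hnya2 h.symm)
                (by rintro rfl; exact hvnA ha1) (by rintro rfl; exact hynA ha1)
                (by rintro rfl; exact hvnA ha2) (by rintro rfl; exact hynA ha2)
            · push_neg at hgood
              replace hgood : (A.filter fun u => G.Adj x u ∧ ¬ G.Adj y u ∧ u ≠ a0).card ≤ 1 :=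
                Nat.lt_succ_iff.mp hgood
              have hcov : A.filter (fun u => G.Adj x u) ⊆
                  ((A.filter fun u => G.Adj x u ∧ G.Adj y u ∧ u ≠ a0) ∪
                   (A.filter fun u => G.Adj x u ∧ ¬ G.Adj y u ∧ u ≠ a0)) ∪ {a0} := by
                intro u hu
                simp only [Finset.mem_filter, Finset.mem_union, Finset.mem_singleton]
                  at hu ⊢
                by_cases h1 : u = a0
                · tauto
                · by_cases h2 : G.Adj y u <;> tauto
              have hcc := (Finset.card_le_card hcov).trans (Finset.card_union_le _ _)
              have hcc2 := Finset.card_union_le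
                (A.filter fun u => G.Adj x u ∧ G.Adj y u ∧ u ≠ a0)
                (A.filter fun u => G.Adj x u ∧ ¬ G.Adj y u ∧ u ≠ a0)
              have hs1 : ({a0} : Finset V).card = 1 := Finset.card_singleton a0
              have h1 : 1 ≤ (A.filter fun u => G.Adj x u ∧ G.Adj y u ∧ u ≠ a0).card := by
                omega
              obtain ⟨a2, ha2, hxa2, hya2, hne2⟩ := pick1 h1
              have huya : ∀ u ∈ A, G.Adj y u → u = a2 := fun u hu hadj =>
                Finset.card_le_one.mp hyA1 _ (Finset.mem_filter.mpr ⟨hu, hadj⟩) _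
                  (Finset.mem_filter.mpr ⟨ha2, hya2⟩)
              have hnya0 : ¬ G.Adj y a0 := fun h => hne2 (huya a0 ha0 h).symm
              have h1e : 1 ≤ (((A.filter (fun u => G.Adj x u)).erase a0).erase a2).card := by
                have e1 := Finset.card_erase_of_mem
                  (Finset.mem_filter.mpr ⟨ha0, hax.symm⟩ :
                    a0 ∈ A.filter (fun u => G.Adj x u))
                have e2 := Finset.card_erase_of_mem
                  (Finset.mem_erase.mpr ⟨hne2, Finset.mem_filter.mpr ⟨ha2, hxa2⟩⟩ :
                    a2 ∈ (A.filter (fun u => G.Adj x u)).erase a0)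
                omega
              obtain ⟨a3, ha3e⟩ := Finset.card_pos.mp h1e
              rw [Finset.mem_erase, Finset.mem_erase, Finset.mem_filter] at ha3e
              obtain ⟨hne32, hne30, ha3, hxa3⟩ := ha3e
              have hnya3 : ¬ G.Adj y a3 := fun h => hne32 (huya a3 ha3 h)
              obtain ⟨b1, b2, hb1, hb2, hb12, hyb1, hyb2⟩ := pick2 hSyB
              by_cases hxb : G.Adj x b1 ∨ G.Adj x b2
              · obtain ⟨bs, hbs, hxbs, hybs⟩ :
                    ∃ bs, bs ∈ B ∧ G.Adj x bs ∧ G.Adj y bs := by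
                  rcases hxb with h | h
                  exacts [⟨b1, hb1, h, hyb1⟩, ⟨b2, hb2, h, hyb2⟩]
                -- center x : triangles x-a0-a3 and x-bs-y
                exact bowtie_emb hax.symm hxa3 hxbs hxy
                  (hAadj ha0 ha3 (Ne.symm hne30)) hybs.symm
                  (hanti _ ha0 _ hbs) (fun h => hnya0 h.symm)
                  (hanti _ ha3 _ hbs) (fun h => hnya3 h.symm)
                  (by rintro rfl; exact hnAB ha0 hbs) (by rintro rfl; exact hynA ha0)
                  (by rintro rfl; exact hnAB ha3 hbs) (by rintro rfl; exact hynA ha3)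
              · push_neg at hxb
                -- center y : triangles y-a2-x and y-b1-b2
                exact bowtie_emb hya2 hxy.symm hyb1 hyb2 hxa2.symm
                  (hBadj hb1 hb2 hb12)
                  (hanti _ ha2 _ hb1) (hanti _ ha2 _ hb2) hxb.1 hxb.2
                  (by rintro rfl; exact hnAB ha2 hb1) (by rintro rfl; exact hnAB ha2 hb2)
                  (by rintro rfl; exact hxnB hb1) (by rintro rfl; exact hxnB hb2)
          · -- ¬ x ~ y
            by_cases hya0 : G.Adj y a0
            · have huya : ∀ u ∈ A, G.Adj y u → u = a0 := fun u hu hadj =>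
                Finset.card_le_one.mp hyA1 _ (Finset.mem_filter.mpr ⟨hu, hadj⟩) _
                  (Finset.mem_filter.mpr ⟨ha0, hya0⟩)
              have h2 : 2 ≤ (A.erase a0).card := by
                rw [Finset.card_erase_of_mem ha0]; omega
              obtain ⟨a1, ha1e, a2, ha2e, h12⟩ := Finset.one_lt_card.mp h2
              rw [Finset.mem_erase] at ha1e ha2e
              obtain ⟨hne1, ha1⟩ := ha1e
              obtain ⟨hne2, ha2⟩ := ha2e
              -- center a0 : triangles a0-v-y and a0-a1-a2
              exact bowtie_emb hva0.symm hya0.symm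
                (hAadj ha0 ha1 (Ne.symm hne1)) (hAadj ha0 ha2 (Ne.symm hne2))
                hvy (hAadj ha1 ha2 h12)
                (fun h => hne1 (hua a1 ha1 h)) (fun h => hne2 (hua a2 ha2 h))
                (fun h => hne1 (huya a1 ha1 h)) (fun h => hne2 (huya a2 ha2 h))
                (by rintro rfl; exact hvnA ha1) (by rintro rfl; exact hvnA ha2)
                (by rintro rfl; exact hynA ha1) (by rintro rfl; exact hynA ha2)
            · by_cases hxb0 : G.Adj x b0
              · have hxB1 : (B.filter (fun u => G.Adj x u)).card ≤ 1 := by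
                  by_contra h; push_neg at h; exact h22 x ⟨by omega, by omega⟩
                have hubx : ∀ b' ∈ B, G.Adj x b' → b' = b0 := fun b' h' hadj =>
                  Finset.card_le_one.mp hxB1 _ (Finset.mem_filter.mpr ⟨h', hadj⟩) _
                    (Finset.mem_filter.mpr ⟨hb0, hxb0⟩)
                have h2 : 2 ≤ (B.erase b0).card := by
                  rw [Finset.card_erase_of_mem hb0]; omega
                obtain ⟨b2, hb2e, b3, hb3e, h23⟩ := Finset.one_lt_card.mp h2
                rw [Finset.mem_erase] at hb2e hb3e
                obtain ⟨hne2, hb2⟩ := hb2e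
                obtain ⟨hne3, hb3⟩ := hb3e
                -- center b0 : triangles b0-v-x and b0-b2-b3
                exact bowtie_emb hvb0.symm hxb0.symm
                  (hBadj hb0 hb2 (Ne.symm hne2)) (hBadj hb0 hb3 (Ne.symm hne3))
                  hvx (hBadj hb2 hb3 h23)
                  (fun h => hne2 (hubv b2 hb2 h)) (fun h => hne3 (hubv b3 hb3 h))
                  (fun h => hne2 (hubx b2 hb2 h)) (fun h => hne3 (hubx b3 hb3 h))
                  (by rintro rfl; exact hvnB hb2) (by rintro rfl; exact hvnB hb3)
                  (by rintro rfl; exact hxnB hb2) (by rintro rfl; exact hxnB hb3)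
              · -- center v : triangles v-x-a0 and v-y-b0
                exact bowtie_emb hvx hva0 hvy hvb0 hax.symm hby.symm
                  hxy hxb0 (fun h => hya0 h.symm) (hanti _ ha0 _ hb0)
                  hxyne (by rintro rfl; exact hxnB hb0)
                  (by rintro rfl; exact hynA ha0) (by rintro rfl; exact hnAB ha0 hb0)
        · -- I.2.b.i
          push_neg at hSxA
          replace hSxA : (A.filter (fun u => G.Adj x u)).card ≤ 2 :=
            Nat.lt_succ_iff.mp hSxA
          exact centerA hA4 hAadj ha0 hvnA hxnA hva0 hvx hax hua (by omega)
    · -- I.1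
      push_neg at hSyB
      replace hSyB : (B.filter (fun u => G.Adj y u)).card ≤ 1 := Nat.lt_succ_iff.mp hSyB
      have hcovB : B ⊆ B.filter (fun u => G.Adj y u) ∪ B.filter (fun u => ¬ G.Adj y u) := by
        intro u hu; simp only [Finset.mem_filter, Finset.mem_union]; tauto
      have hcc := (Finset.card_le_card hcovB).trans (Finset.card_union_le _ _)
      have hT2 : 2 ≤ (B.filter fun u => ¬ G.Adj y u).card := by omega
      obtain ⟨b2, b3, hb2, hb3, h23, hnyb2, hnyb3⟩ := pick2 hT2
      have hne2 : b2 ≠ b0 := by rintro rfl; exact hnyb2 hby.symm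
      have hne3 : b3 ≠ b0 := by rintro rfl; exact hnyb3 hby.symm
      -- center b0 : triangles b0-v-y and b0-b2-b3
      exact bowtie_emb hvb0.symm hby
        (hBadj hb0 hb2 (Ne.symm hne2)) (hBadj hb0 hb3 (Ne.symm hne3))
        hvy (hBadj hb2 hb3 h23)
        (fun h => hne2 (hubv b2 hb2 h)) (fun h => hne3 (hubv b3 hb3 h))
        hnyb2 hnyb3
        (by rintro rfl; exact hvnB hb2) (by rintro rfl; exact hvnB hb3)
        (by rintro rfl; exact hynB hb2) (by rintro rfl; exact hynB hb3)
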